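/- arXiv:1701.06664 — 3 statements merged into one kernel-verified Lean document; each statement's English description precedes it below -/
import Mathlib

section
/- Let C be an F_q-linear code of length n (a nonzero F_q-linear subspace of Fin n → F_q) of dimension k ≥ 1, and let d be its minimum distance (the minimum Hamming weight of a nonzero codeword). Suppose C has information locality l ≥ 1: there exists an information set I ⊆ Fin n with |I| = k (the projection of C to the coordinates in I is injective) such that for every i ∈ I there is a subset R_i ⊆ Fin n \ {i} with |R_i| ≤ l and coefficients (λ_{i,j})_{j ∈ R_i} in F_q with c i = Σ_{j ∈ R_i} λ_{i,j} · (c j) for every codeword c ∈ C. Then d ≤ n − k − ⌈k/l⌉ + 2. -/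
/- The Hamming weight of a codeword: the number of nonzero coordinates. -/
open Classical in
noncomputable def hammingWt {F : Type} [Field F] {n : ℕ} (c : Fin n → F) : ℕ :=
  (Finset.univ.filter fun i => c i ≠ 0).card

/-- `I` is an information set for the linear code `C` if the restriction of codewords
to the coordinates in `I` is injective on `C`. -/
def IsInfoSetL {F : Type} [Field F] {n : ℕ}
    (C : Submodule F (Fin n → F)) (I : Finset (Fin n)) : Prop :=
  ∀ c ∈ C, ∀ c' ∈ C, (∀ i ∈ I, c i = c' i) → c = c'

/-- The minimum distance of a (nonzero) linear code: the minimum Hamming weight of a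
nonzero codeword. -/
noncomputable def dminL {F : Type} [Field F] {n : ℕ} (C : Submodule F (Fin n → F)) : ℕ :=
  sInf {w | ∃ c ∈ C, c ≠ 0 ∧ hammingWt c = w}

namespace GHSYaux

variable {F : Type} [Field F] {n : ℕ}

/-- The subcode of codewords vanishing on `T`. -/
noncomputable def Ks (C : Submodule F (Fin n → F)) (T : Finset (Fin n)) :
    Submodule F (Fin n → F) :=
  C ⊓ ⨅ j ∈ T, LinearMap.ker (LinearMap.proj (R := F) (φ := fun _ : Fin n => F) j)

lemma mem_Ks {C : Submodule F (Fin n → F)} {T : Finset (Fin n)} {c : Fin n → F} :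
    c ∈ Ks C T ↔ c ∈ C ∧ ∀ j ∈ T, c j = 0 := by
  simp [Ks]

/-- The nullity of the coordinate set `T`. -/
noncomputable def nu (C : Submodule F (Fin n → F)) (T : Finset (Fin n)) : ℕ :=
  Module.finrank F (Ks C T)

lemma Ks_mono (C : Submodule F (Fin n → F)) {T T' : Finset (Fin n)} (h : T ⊆ T') :
    Ks C T' ≤ Ks C T := by
  intro c hc
  rw [mem_Ks] at hc ⊢
  exact ⟨hc.1, fun j hj => hc.2 j (h hj)⟩

lemma nu_mono (C : Submodule F (Fin n → F)) {T T' : Finset (Fin n)} (h : T ⊆ T') :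
    nu C T' ≤ nu C T :=
  Submodule.finrank_mono (Ks_mono C h)

set_option synthInstance.maxHeartbeats 1000000 in
set_option maxHeartbeats 1000000 in
lemma nu_insert (C : Submodule F (Fin n → F)) (j : Fin n) (T : Finset (Fin n)) :
    nu C T ≤ nu C (insert j T) + 1 := by
  classical
  set φ : ↥(Ks C T) →ₗ[F] F :=
    (LinearMap.proj (R := F) (φ := fun _ : Fin n => F) j).comp (Ks C T).subtype with hφ
  have hrn := LinearMap.finrank_range_add_finrank_ker φ
  have h1 : Module.finrank F (LinearMap.range φ) ≤ 1 := by
    simpa using Submodule.finrank_le (LinearMap.range φ)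
  have h2 : Module.finrank F (LinearMap.ker φ) ≤ nu C (insert j T) := by
    have hmem : ∀ x : LinearMap.ker φ, (x : ↥(Ks C T)).1 ∈ Ks C (insert j T) := by
      rintro ⟨⟨c, hc⟩, hx⟩
      rw [mem_Ks] at hc ⊢
      refine ⟨hc.1, fun j' hj' => ?_⟩
      rcases Finset.mem_insert.1 hj' with rfl | hj'
      · simpa [hφ] using hx
      · exact hc.2 j' hj'
    have hle : Submodule.map (Ks C T).subtype (LinearMap.ker φ) ≤ Ks C (insert j T) := by
      rintro _ ⟨x, hx, rfl⟩
      simpa using hmem ⟨x, hx⟩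
    have heq := LinearEquiv.finrank_eq
      (Submodule.equivMapOfInjective (Ks C T).subtype (Ks C T).injective_subtype (LinearMap.ker φ))
    rw [heq]
    exact Submodule.finrank_mono hle
  have e1 : nu C T = Module.finrank F ↥(Ks C T) := rfl
  omega

lemma nu_union (C : Submodule F (Fin n → F)) (S : Finset (Fin n)) :
    ∀ T : Finset (Fin n), nu C T ≤ nu C (T ∪ S) + S.card := by
  induction S using Finset.induction with
  | empty => intro T; simp
  | @insert a S ha ih =>
    intro T
    have h1 := ih T
    have h2 := nu_insert C a (T ∪ S)
    have h3 : T ∪ insert a S = insert a (T ∪ S) := by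
      ext x; simp only [Finset.mem_union, Finset.mem_insert]; tauto
    rw [h3, Finset.card_insert_of_notMem ha]
    omega

lemma card_union_sdiff (A B : Finset (Fin n)) : (A ∪ B).card = A.card + (B \ A).card := by
  rw [← Finset.union_sdiff_self_eq_union]
  exact Finset.card_union_of_disjoint Finset.disjoint_sdiff

/-- Adding a locally-repairable coordinate `i` to a set containing its repair set `R`
does not change the vanishing subcode. -/
lemma Ks_insert_eq {C : Submodule F (Fin n → F)} {i : Fin n} {R X : Finset (Fin n)}
    {lam : Fin n → F} (hrel : ∀ c ∈ C, c i = ∑ j ∈ R, lam j * c j) (hRX : R ⊆ X) :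
    Ks C (insert i X) = Ks C X := by
  ext c
  simp only [mem_Ks]
  constructor
  · rintro ⟨h1, h2⟩
    exact ⟨h1, fun j hj => h2 j (Finset.mem_insert_of_mem hj)⟩
  · rintro ⟨h1, h2⟩
    refine ⟨h1, fun j hj => ?_⟩
    rcases Finset.mem_insert.1 hj with rfl | hj
    · rw [hrel c h1]
      exact Finset.sum_eq_zero fun j hj => by rw [h2 j (hRX hj), mul_zero]
    · exact h2 j hj

/-- If the nullity of `T₀` is positive but drops to `0` upon adding `R`, then some
subset of `R` brings it to exactly `1`. -/
lemma trim (C : Submodule F (Fin n → F)) :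
    ∀ (m : ℕ) (R T₀ : Finset (Fin n)), R.card ≤ m → 1 ≤ nu C T₀ →
      nu C (T₀ ∪ R) = 0 → ∃ S ⊆ R, nu C (T₀ ∪ S) = 1 := by
  intro m
  induction m with
  | zero =>
    intro R T₀ hc h1 h0
    have hR : R = ∅ := Finset.card_eq_zero.1 (Nat.le_zero.1 hc)
    rw [hR, Finset.union_empty] at h0
    omega
  | succ m ih =>
    intro R T₀ hc h1 h0
    by_cases h : nu C T₀ = 1
    · exact ⟨∅, Finset.empty_subset R, by simpa using h⟩
    · have h2 : 2 ≤ nu C T₀ := by omega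
      have hR : R.Nonempty := by
        rcases Finset.eq_empty_or_nonempty R with rfl | hR
        · rw [Finset.union_empty] at h0; omega
        · exact hR
      obtain ⟨a, ha⟩ := hR
      have hins := nu_insert C a T₀
      have hcard : (R.erase a).card ≤ m := by
        have := Finset.card_erase_of_mem ha
        omega
      have hsets : insert a T₀ ∪ R.erase a = T₀ ∪ R := by
        ext x
        simp only [Finset.mem_union, Finset.mem_insert, Finset.mem_erase]
        rcases eq_or_ne x a with rfl | hx
        · simp [ha]
        · simp [hx]
      have h0' : nu C (insert a T₀ ∪ R.erase a) = 0 := by rw [hsets]; exact h0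
      obtain ⟨S, hS, hS1⟩ := ih (R.erase a) (insert a T₀) hcard (by omega) h0'
      refine ⟨insert a S, ?_, ?_⟩
      · exact Finset.insert_subset ha (hS.trans (Finset.erase_subset a R))
      · have : T₀ ∪ insert a S = insert a T₀ ∪ S := by
          ext x
          simp only [Finset.mem_union, Finset.mem_insert]
          tauto
        rw [this]; exact hS1

lemma nonzero_of_nu_pos {C : Submodule F (Fin n → F)} {T : Finset (Fin n)}
    (h : 1 ≤ nu C T) : ∃ c : Fin n → F, c ∈ Ks C T ∧ c ≠ 0 := by
  have : 0 < Module.finrank F (Ks C T) := h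
  have : Nontrivial ↥(Ks C T) := Module.nontrivial_of_finrank_pos this
  obtain ⟨c, hc⟩ := exists_ne (0 : ↥(Ks C T))
  exact ⟨c.1, c.2, fun h => hc (Subtype.ext h)⟩

/-- The main greedy construction. -/
lemma main {l : ℕ} (hl : 1 ≤ l) (C : Submodule F (Fin n → F)) (I : Finset (Fin n))
    (hI : IsInfoSetL C I)
    (hloc : ∀ i ∈ I, ∃ R : Finset (Fin n), i ∉ R ∧ R.card ≤ l ∧
      ∃ lam : Fin n → F, ∀ c ∈ C, c i = ∑ j ∈ R, lam j * c j) :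
    ∀ v, 2 ≤ v → ∀ T : Finset (Fin n), nu C T = v →
      ∃ T', T ⊆ T' ∧ nu C T' = 1 ∧ T.card + v + (v + l - 1) / l ≤ T'.card + 2 := by
  intro v
  induction v using Nat.strong_induction_on with
  | _ v ih =>
    intro hv2 T hT
    obtain ⟨c, hcK, hc0⟩ := nonzero_of_nu_pos (C := C) (T := T) (by omega)
    rw [mem_Ks] at hcK
    obtain ⟨hcC, hcT⟩ := hcK
    have hex : ∃ i ∈ I, c i ≠ 0 := by
      by_contra h
      push_neg at h
      exact hc0 (hI c hcC 0 C.zero_mem (fun i hi => by simpa using h i hi))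
    obtain ⟨i, hiI, hci⟩ := hex
    obtain ⟨R, hiR, hRl, lam, hrel⟩ := hloc i hiI
    have hiT : i ∉ T := fun h => hci (hcT i h)
    have hiTR : i ∉ T ∪ R := by simp [hiT, hiR]
    have hK1 : Ks C (insert i (T ∪ R)) = Ks C (T ∪ R) :=
      Ks_insert_eq hrel Finset.subset_union_right
    have hnuT₁ : nu C (insert i (T ∪ R)) = nu C (T ∪ R) :=
      congrArg (fun p : Submodule F (Fin n → F) => Module.finrank F p) hK1
    have hsl : (R \ T).card ≤ l := le_trans (Finset.card_le_card (Finset.sdiff_subset)) hRl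
    have hdrop : v ≤ nu C (T ∪ R) + (R \ T).card := by
      have h := nu_union C (R \ T) T
      rw [Finset.union_sdiff_self_eq_union] at h
      omega
    have hcard1 : (insert i (T ∪ R)).card = T.card + (R \ T).card + 1 := by
      rw [Finset.card_insert_of_notMem hiTR, card_union_sdiff]
    have hlt : nu C (T ∪ R) < v := by
      have hle : Ks C (insert i (T ∪ R)) ≤ Ks C T :=
        Ks_mono C (by intro x hx; exact Finset.mem_insert_of_mem (Finset.mem_union_left _ hx))
      have hne : Ks C (insert i (T ∪ R)) ≠ Ks C T := by
        intro h
        have hmem : c ∈ Ks C (insert i (T ∪ R)) := by rw [h, mem_Ks]; exact ⟨hcC, hcT⟩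
        rw [mem_Ks] at hmem
        exact hci (hmem.2 i (Finset.mem_insert_self _ _))
      have hfr := Submodule.finrank_lt_finrank_of_lt (lt_of_le_of_ne hle hne)
      have e1 : nu C (insert i (T ∪ R)) = Module.finrank F ↥(Ks C (insert i (T ∪ R))) := rfl
      have e2 : nu C T = Module.finrank F ↥(Ks C T) := rfl
      omega
    rcases Nat.lt_or_ge (nu C (T ∪ R)) 1 with hv10 | hv11
    · -- overshoot: trim
      have hvl : v ≤ l := by omega
      have hcd : (v + l - 1) / l = 1 := by
        apply Nat.div_eq_of_lt_le <;> omega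
      have h1T₀ : 1 ≤ nu C (insert i T) := by
        have := nu_insert C i T
        omega
      have h0 : nu C (insert i T ∪ R) = 0 := by
        have hset : insert i T ∪ R = insert i (T ∪ R) := by
          ext x; simp only [Finset.mem_union, Finset.mem_insert]; tauto
        rw [hset]
        omega
      obtain ⟨S, hSR, hS1⟩ := trim C R.card R (insert i T) le_rfl h1T₀ h0
      refine ⟨insert i T ∪ S, ?_, hS1, ?_⟩
      · exact (Finset.subset_insert i T).trans Finset.subset_union_left
      · have hc2 : (insert i T ∪ S).card = (insert i T).card + (S \ insert i T).card :=
          card_union_sdiff _ _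
        have hc3 : (insert i T).card = T.card + 1 := Finset.card_insert_of_notMem hiT
        have hc4 : nu C (insert i T) ≤ nu C (insert i T ∪ S) + (S \ insert i T).card := by
          have h := nu_union C (S \ insert i T) (insert i T)
          rw [Finset.union_sdiff_self_eq_union] at h
          exact h
        rw [hS1] at hc4
        have hins := nu_insert C i T
        rw [hcd]
        omega
    · rcases Nat.lt_or_ge (nu C (T ∪ R)) 2 with hv1lt | hv1ge
      · -- ended exactly at nullity 1
        refine ⟨insert i (T ∪ R), ?_, by omega, ?_⟩
        · exact (Finset.subset_union_left).trans (Finset.subset_insert _ _)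
        · have hcd : (v + l - 1) / l ≤ 2 := by
            have h2l : l * 2 / l = 2 := Nat.mul_div_cancel_left 2 (by omega)
            have hmono := Nat.div_le_div_right (c := l) (show v + l - 1 ≤ l * 2 by omega)
            omega
          obtain ⟨a, ha⟩ : ∃ a, (v + l - 1) / l = a := ⟨_, rfl⟩
          rw [ha] at hcd ⊢
          omega
      · -- recurse
        obtain ⟨T', hT'sub, hT'1, hT'card⟩ := ih (nu C (T ∪ R)) hlt hv1ge _ hnuT₁
        refine ⟨T', ?_, hT'1, ?_⟩
        · exact ((Finset.subset_union_left).trans (Finset.subset_insert _ _)).trans hT'sub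
        · have hstep : ((nu C (T ∪ R) + l - 1) + l) / l = (nu C (T ∪ R) + l - 1) / l + 1 :=
            Nat.add_div_right _ (by omega)
          have hmono := Nat.div_le_div_right (c := l)
            (show v + l - 1 ≤ (nu C (T ∪ R) + l - 1) + l by omega)
          obtain ⟨a, ha⟩ : ∃ a, (v + l - 1) / l = a := ⟨_, rfl⟩
          obtain ⟨b, hb⟩ : ∃ b, (nu C (T ∪ R) + l - 1) / l = b := ⟨_, rfl⟩
          obtain ⟨d, hd⟩ : ∃ d, ((nu C (T ∪ R) + l - 1) + l) / l = d := ⟨_, rfl⟩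
          rw [ha] at hmono ⊢
          rw [hb] at hstep hT'card
          rw [hd] at hstep hmono
          omega

end GHSYaux

/-- Gopalan–Huang–Simitci–Yekhanin bound: a nonzero linear code of length `n`,
dimension `k ≥ 1` and information locality `l ≥ 1` (every coordinate of some information
set of size `k` is a linear combination of at most `l` other coordinates, uniformly over
all codewords) has minimum distance `d ≤ n - k - ⌈k/l⌉ + 2`. -/
theorem information_locality_singleton_bound {F : Type} [Field F] [Fintype F] {n k l : ℕ}
    (hk : 1 ≤ k) (hl : 1 ≤ l)
    (C : Submodule F (Fin n → F)) (hC : C ≠ ⊥)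
    (hdim : Module.finrank F C = k)
    (hloc : ∃ I : Finset (Fin n), I.card = k ∧ IsInfoSetL C I ∧
      ∀ i ∈ I, ∃ R : Finset (Fin n), i ∉ R ∧ R.card ≤ l ∧
        ∃ lam : Fin n → F, ∀ c ∈ C, c i = ∑ j ∈ R, lam j * c j) :
    (dminL C : ℤ) ≤ (n : ℤ) - (k : ℤ) - ⌈(k : ℚ) / (l : ℚ)⌉ + 2 := by
  classical
  obtain ⟨I, hIcard, hI, hlocI⟩ := hloc
  have hKempty : GHSYaux.Ks C ∅ = C := by
    ext c; simp [GHSYaux.mem_Ks]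
  have hnuempty : GHSYaux.nu C ∅ = k := by
    have : GHSYaux.nu C ∅ = Module.finrank F C :=
      congrArg (fun p : Submodule F (Fin n → F) => Module.finrank F p) hKempty
    rw [this, hdim]
  -- obtain a set T' with nullity 1 and large cardinality
  have hmain : ∃ T' : Finset (Fin n), GHSYaux.nu C T' = 1 ∧
      k + (k + l - 1) / l ≤ T'.card + 2 := by
    rcases Nat.lt_or_ge k 2 with hk2 | hk2
    · have hk1 : k = 1 := by omega
      refine ⟨∅, by rw [hnuempty, hk1], ?_⟩
      have : (k + l - 1) / l = 1 := by
        apply Nat.div_eq_of_lt_le <;> omega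
      omega
    · obtain ⟨T', _, hT'1, hT'card⟩ :=
        GHSYaux.main hl C I hI hlocI k hk2 ∅ hnuempty
      exact ⟨T', hT'1, by simpa using hT'card⟩
  obtain ⟨T', hT'1, hT'card⟩ := hmain
  obtain ⟨c, hcK, hc0⟩ := GHSYaux.nonzero_of_nu_pos (le_of_eq hT'1.symm)
  rw [GHSYaux.mem_Ks] at hcK
  obtain ⟨hcC, hcT'⟩ := hcK
  -- dminL ≤ hammingWt c
  have hdle : dminL C ≤ hammingWt c := Nat.sInf_le ⟨c, hcC, hc0, rfl⟩
  -- hammingWt c + T'.card ≤ n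
  have hwt : hammingWt c + T'.card ≤ n := by
    unfold hammingWt
    have hd : Disjoint (Finset.univ.filter fun i => c i ≠ 0) T' := by
      rw [Finset.disjoint_right]
      intro a haT' hafil
      rw [Finset.mem_filter] at hafil
      exact hafil.2 (hcT' a haT')
    calc (Finset.univ.filter fun i => c i ≠ 0).card + T'.card
        = ((Finset.univ.filter fun i => c i ≠ 0) ∪ T').card :=
          (Finset.card_union_of_disjoint hd).symm
      _ ≤ (Finset.univ : Finset (Fin n)).card := Finset.card_le_univ _
      _ = n := by simp
  -- ceiling bound : ⌈k/l⌉ ≤ (k + l - 1)/l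
  have hceil : (⌈(k : ℚ) / (l : ℚ)⌉ : ℤ) ≤ ((k + l - 1) / l : ℕ) := by
    rw [Int.ceil_le]
    have hlq : (0 : ℚ) < (l : ℚ) := by exact_mod_cast hl
    rw [div_le_iff₀ hlq]
    have hnat : k ≤ ((k + l - 1) / l) * l := by
      have hdm := Nat.div_add_mod (k + l - 1) l
      have hmod : (k + l - 1) % l < l := Nat.mod_lt _ (by omega)
      obtain ⟨A, hA⟩ : ∃ A, l * ((k + l - 1) / l) = A := ⟨_, rfl⟩
      rw [hA] at hdm
      rw [mul_comm, hA]
      omega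
    push_cast
    exact_mod_cast hnat
  -- final arithmetic
  have hd2 : dminL C + T'.card ≤ n := le_trans (Nat.add_le_add_right hdle _) hwt
  obtain ⟨q, hq⟩ : ∃ q, (k + l - 1) / l = q := ⟨_, rfl⟩
  rw [hq] at hT'card hceil
  omega
end

section
/- Let C be a nonzero F_q-linear vector code of block length n and vector length α whose dimension over F_q equals K = kα for an integer k ≥ 1. Let l ≥ 1 and δ ≥ 1 be integers, and suppose C has (l, δ) information locality: there exist subsets S₁, …, S_m ⊆ Fin n such that (i) |S_i| ≤ l + δ − 1 for every i; (ii) for every i, every nonzero element of the punctured code C|_{S_i} (the image of the projection of C to the coordinates in S_i) has at least δ nonzero vector symbols; and (iii) the projection of C to the union S₁ ∪ ⋯ ∪ S_m is injective on C. Then the minimum distance of C satisfies d_min(C) ≤ n − k + 1 − (⌈k/l⌉ − 1)(δ − 1). -/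
set_option maxHeartbeats 1000000
set_option synthInstance.maxHeartbeats 1000000



/- The block Hamming weight of a vector codeword: the number of nonzero vector symbols. -/
open Classical in
noncomputable def blockWeight {F : Type} [Field F] {n α : ℕ} (c : Fin n → Fin α → F) : ℕ :=
  (Finset.univ.filter fun i => c i ≠ 0).card

/-- The minimum distance of a (nonzero) vector code: the minimum block Hamming weight
of a nonzero codeword. -/
noncomputable def dmin {F : Type} [Field F] {n α : ℕ}
    (C : Submodule F (Fin n → Fin α → F)) : ℕ :=
  sInf {w | ∃ c ∈ C, c ≠ 0 ∧ blockWeight c = w}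

/- Kamath et al. bound: a nonzero vector code of block length `n` with `F_q`-dimension
`K = k·α` and `(l, δ)` information locality has minimum distance
`d_min ≤ n - k + 1 - (⌈k/l⌉ - 1)(δ - 1)`. The `(l, δ)` information locality is witnessed
by supports `S i` of punctured codes: each has size at most `l + δ - 1`, every nonzero
element of the punctured code `C|_{S i}` has at least `δ` nonzero vector symbols, and the
restriction of `C` to the union of the supports is injective. -/

section KamathAux2
open Module
def vanishOn (F : Type) [Field F] {n : ℕ} (α : ℕ) (A : Finset (Fin n)) :
    Submodule F (Fin n → Fin α → F) where
  carrier := {c | ∀ j ∈ A, c j = 0}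
  add_mem' := by intro a b ha hb j hj; simp [ha j hj, hb j hj]
  zero_mem' := by intro j hj; rfl
  smul_mem' := by intro r a ha j hj; simp [ha j hj]

variable {F : Type} [Field F] {n α : ℕ}

lemma mem_vanishOn {A : Finset (Fin n)} {c : Fin n → Fin α → F} :
    c ∈ vanishOn F α A ↔ ∀ j ∈ A, c j = 0 := Iff.rfl

noncomputable def fA (C : Submodule F (Fin n → Fin α → F)) (A : Finset (Fin n)) : ℕ :=
  finrank F ↥(C ⊓ vanishOn F α A)

lemma vanishOn_anti {A B : Finset (Fin n)} (h : A ⊆ B) :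
    vanishOn F α B ≤ vanishOn F α A := fun c hc j hj => hc j (h hj)

lemma NA_anti (C : Submodule F (Fin n → Fin α → F)) {A B : Finset (Fin n)} (h : A ⊆ B) :
    C ⊓ vanishOn F α B ≤ C ⊓ vanishOn F α A :=
  inf_le_inf_left C (vanishOn_anti h)

lemma fA_rank_nullity (C : Submodule F (Fin n → Fin α → F)) (A B : Finset (Fin n)) :
    fA C A ≤ fA C (A ∪ B) + (B \ A).card * α := by
  classical
  set N := C ⊓ vanishOn F α A with hN
  let g : ↥N →ₗ[F] (↥(B \ A : Finset (Fin n)) → Fin α → F) :=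
    (LinearMap.funLeft F (Fin α → F) (fun j : ↥(B \ A : Finset (Fin n)) => (j : Fin n))).comp
      N.subtype
  have hker : LinearMap.ker g = Submodule.comap N.subtype (C ⊓ vanishOn F α (A ∪ B)) := by
    ext ⟨c, hc⟩
    simp only [LinearMap.mem_ker, Submodule.mem_comap, Submodule.mem_inf, Submodule.coe_subtype,
      mem_vanishOn]
    constructor
    · intro h0
      refine ⟨(Submodule.mem_inf.mp hc).1, ?_⟩
      intro j hj
      rcases Finset.mem_union.mp hj with hj | hj
      · exact (Submodule.mem_inf.mp hc).2 j hj
      · by_cases hjA : j ∈ A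
        · exact (Submodule.mem_inf.mp hc).2 j hjA
        · have : c j = (0 : Fin n → Fin α → F) j := by
            have := congrFun h0 ⟨j, Finset.mem_sdiff.mpr ⟨hj, hjA⟩⟩
            simpa [g] using this
          simpa using this
    · intro ⟨hcC, h0⟩
      funext j
      have : c (j : Fin n) = 0 := h0 j (Finset.mem_union.mpr (Or.inr (Finset.mem_sdiff.mp j.2).1))
      simpa [g] using this
  have hle : C ⊓ vanishOn F α (A ∪ B) ≤ N := NA_anti C (Finset.subset_union_left)
  have h1 : finrank F ↥(LinearMap.range g) + finrank F ↥(LinearMap.ker g) = finrank F ↥N :=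
    LinearMap.finrank_range_add_finrank_ker g
  have h2 : finrank F ↥(LinearMap.ker g) = fA C (A ∪ B) := by
    rw [hker]
    exact (Submodule.comapSubtypeEquivOfLe hle).finrank_eq
  have h3 : finrank F ↥(LinearMap.range g) ≤ (B \ A).card * α := by
    calc finrank F ↥(LinearMap.range g)
        ≤ finrank F (↥(B \ A : Finset (Fin n)) → Fin α → F) := Submodule.finrank_le _
      _ = (B \ A).card * α := by
          rw [Module.finrank_pi_fintype, Finset.sum_const]
          simp [Module.finrank_pi]
  have e1 : fA C A = finrank F ↥N := rfl
  omega

lemma fA_nonzero (C : Submodule F (Fin n → Fin α → F)) {A : Finset (Fin n)}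
    (hA : 1 ≤ fA C A) : ∃ c, c ∈ C ⊓ vanishOn F α A ∧ c ≠ 0 := by
  have hbot : C ⊓ vanishOn F α A ≠ ⊥ := by
    intro h
    unfold fA at hA
    rw [h] at hA
    simp at hA
  obtain ⟨c, hc, hc0⟩ := (Submodule.ne_bot_iff _).mp hbot
  exact ⟨c, hc, hc0⟩

end KamathAux2

open Classical in
theorem locality_l_delta_distance_bound {F : Type} [Field F] [Fintype F] {n α k l δ : ℕ}
    (hk : 1 ≤ k) (hl : 1 ≤ l) (hδ : 1 ≤ δ)
    (C : Submodule F (Fin n → Fin α → F)) (hC : C ≠ ⊥)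
    (hdim : Module.finrank F C = k * α)
    (hloc : ∃ (m : ℕ) (S : Fin m → Finset (Fin n)),
      (∀ i, (S i).card ≤ l + δ - 1) ∧
      (∀ i, ∀ c ∈ C, (∃ j ∈ S i, c j ≠ 0) →
        δ ≤ ((S i).filter fun j => c j ≠ 0).card) ∧
      (∀ c ∈ C, ∀ c' ∈ C, (∀ j : Fin n, (∃ i, j ∈ S i) → c j = c' j) → c = c')) :
    (dmin C : ℤ) ≤ (n : ℤ) - (k : ℤ) + 1 - (⌈(k : ℚ) / (l : ℚ)⌉ - 1) * ((δ : ℤ) - 1) := by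
  obtain ⟨m, S, hS1, hS2, hS3⟩ := hloc
  -- α ≥ 1
  have hα : 1 ≤ α := by
    rcases Nat.eq_zero_or_pos α with h | h
    · exfalso
      apply hC
      rw [Submodule.eq_bot_iff]
      intro c _
      funext i j
      exact absurd (j.2) (by omega)
    · exact h
  -- f ∅ = k * α
  have hf_empty : fA C ∅ = k * α := by
    have hv : vanishOn F α (∅ : Finset (Fin n)) = ⊤ := by
      ext c; simp [mem_vanishOn]
    unfold fA
    rw [hv, inf_top_eq, hdim]
  -- trimming lemma
  have htrim : ∀ (i : Fin m) (A D : Finset (Fin n)), D.card ≤ δ - 1 →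
      fA C (A ∪ S i) = fA C (A ∪ (S i \ D)) := by
    intro i A D hD
    have hsets : C ⊓ vanishOn F α (A ∪ S i) = C ⊓ vanishOn F α (A ∪ (S i \ D)) := by
      apply le_antisymm
      · exact NA_anti C (Finset.union_subset_union_right Finset.sdiff_subset)
      · intro c hc
        obtain ⟨hcC, hcv⟩ := Submodule.mem_inf.mp hc
        refine Submodule.mem_inf.mpr ⟨hcC, ?_⟩
        intro j hj
        rcases Finset.mem_union.mp hj with hj | hj
        · exact hcv j (Finset.mem_union_left _ hj)
        · by_contra hne
          have hfilter : ((S i).filter fun x => c x ≠ 0) ⊆ D := by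
            intro x hx
            obtain ⟨hxS, hxne⟩ := Finset.mem_filter.mp hx
            by_contra hxD
            exact hxne (hcv x (Finset.mem_union_right _ (Finset.mem_sdiff.mpr ⟨hxS, hxD⟩)))
          have h5 := hS2 i c hcC ⟨j, hj, hne⟩
          have h6 := Finset.card_le_card hfilter
          omega
    unfold fA
    rw [hsets]
  -- existence of a decreasing step
  have hstep_exists : ∀ A : Finset (Fin n), 1 ≤ fA C A →
      ∃ i : Fin m, fA C (A ∪ S i) < fA C A := by
    intro A hA
    obtain ⟨c, hcmem, hc0⟩ := fA_nonzero C hA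
    obtain ⟨hcC, hcv⟩ := Submodule.mem_inf.mp hcmem
    have hex : ∃ i : Fin m, ∃ j ∈ S i, c j ≠ 0 := by
      by_contra hno
      push_neg at hno
      apply hc0
      have := hS3 c hcC 0 (zero_mem C) (fun j hj => by
        obtain ⟨i, hji⟩ := hj
        simpa using hno i j hji)
      simpa using this
    obtain ⟨i, j, hjS, hcj⟩ := hex
    refine ⟨i, ?_⟩
    apply Submodule.finrank_lt_finrank_of_lt
    refine lt_of_le_of_ne (NA_anti C Finset.subset_union_left) ?_
    intro heq
    rw [← heq] at hcmem
    exact hcj ((Submodule.mem_inf.mp hcmem).2 j (Finset.mem_union_right _ hjS))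
  -- per-step accounting
  have hdec : ∀ (A : Finset (Fin n)) (i : Fin m), fA C (A ∪ S i) < fA C A →
      δ ≤ (S i \ A).card ∧
      fA C A ≤ fA C (A ∪ S i) + ((S i \ A).card - (δ - 1)) * α := by
    intro A i hlt
    have hδcard : δ ≤ (S i \ A).card := by
      by_contra hsmall
      push_neg at hsmall
      have htr := htrim i A (S i \ A) (by omega)
      have heq : A ∪ (S i \ (S i \ A)) = A := by
        ext x
        simp only [Finset.mem_union, Finset.mem_sdiff]
        tauto
      rw [heq] at htr
      omega
    obtain ⟨D, hDsub, hDcard⟩ := Finset.exists_subset_card_eq (s := S i \ A) (n := δ - 1) (by omega)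
    have htr := htrim i A D (le_of_eq hDcard)
    have hrn := fA_rank_nullity C A (S i \ D)
    have hset : (S i \ D) \ A = (S i \ A) \ D := by
      ext x
      simp only [Finset.mem_sdiff]
      tauto
    have hcard2 : ((S i \ A) \ D).card = (S i \ A).card - (δ - 1) := by
      rw [Finset.card_sdiff_of_subset hDsub, hDcard]
    refine ⟨hδcard, ?_⟩
    calc fA C A ≤ fA C (A ∪ (S i \ D)) + ((S i \ D) \ A).card * α := hrn
      _ = fA C (A ∪ S i) + ((S i \ A).card - (δ - 1)) * α := by
          rw [← htr, hset, hcard2]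
  -- f univ = 0
  have huniv : fA C (Finset.univ : Finset (Fin n)) = 0 := by
    have hbot : C ⊓ vanishOn F α (Finset.univ : Finset (Fin n)) = ⊥ := by
      rw [Submodule.eq_bot_iff]
      intro c hc
      obtain ⟨hcC, hcv⟩ := Submodule.mem_inf.mp hc
      have := hS3 c hcC 0 (zero_mem C) (fun j _ => by simpa using hcv j (Finset.mem_univ j))
      simpa using this
    unfold fA
    rw [hbot]
    simp
  -- padding lemma E'
  have hE : ∀ (N : ℕ) (A : Finset (Fin n)), n - A.card ≤ N → 1 ≤ fA C A →
      ∃ B : Finset (Fin n), 1 ≤ fA C B ∧ α * A.card + fA C A ≤ α * (B.card + 1) := by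
    intro N
    induction N with
    | zero =>
      intro A hNA hA
      by_cases hsmall : fA C A ≤ α
      · refine ⟨A, hA, ?_⟩
        have : α * (A.card + 1) = α * A.card + α := by ring
        omega
      · exfalso
        have hAne : A ≠ Finset.univ := by
          intro h; rw [h, huniv] at hA; omega
        have : A.card < n := by
          have h7 := Finset.card_lt_card (Finset.ssubset_univ_iff.mpr hAne)
          simpa using h7
        omega
    | succ N ih =>
      intro A hNA hA
      by_cases hsmall : fA C A ≤ α
      · refine ⟨A, hA, ?_⟩
        have : α * (A.card + 1) = α * A.card + α := by ring
        omega
      · have hAne : A ≠ Finset.univ := by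
          intro h; rw [h, huniv] at hA; omega
        obtain ⟨j, hjA⟩ : ∃ j, j ∉ A := by
          by_contra hno
          push_neg at hno
          exact hAne (Finset.eq_univ_iff_forall.mpr hno)
        have hrn := fA_rank_nullity C A {j}
        have hcard1 : (({j} : Finset (Fin n)) \ A).card = 1 := by
          rw [Finset.sdiff_eq_self_of_disjoint (by simpa using hjA)]
          simp
        rw [hcard1, one_mul] at hrn
        have h1' : 1 ≤ fA C (A ∪ {j}) := by omega
        have hcard2 : (A ∪ {j}).card = A.card + 1 := by
          rw [Finset.union_comm, ← Finset.insert_eq, Finset.card_insert_of_notMem hjA]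
        have hc3 : A.card < n := by
          have h7 := Finset.card_lt_card (Finset.ssubset_univ_iff.mpr hAne)
          simpa using h7
        obtain ⟨B, hB1, hB2⟩ := ih (A ∪ {j}) (by omega) h1'
        refine ⟨B, hB1, ?_⟩
        rw [hcard2] at hB2
        have e1 : α * (A.card + 1) = α * A.card + α := by ring
        omega
  -- main induction
  have hMain : ∀ (r : ℕ) (A : Finset (Fin n)) (t : ℕ), fA C A ≤ r → 1 ≤ fA C A →
      k * α + α * t * (δ - 1) ≤ α * A.card + fA C A →
      k * α ≤ fA C A + t * l * α →
      ∃ (B : Finset (Fin n)) (t' : ℕ), 1 ≤ fA C B ∧ k ≤ (t' + 1) * l ∧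
        k + t' * (δ - 1) ≤ B.card + 1 := by
    intro r
    induction r with
    | zero => intro A t h1 h2 _ _; omega
    | succ r ih =>
      intro A t hr h1 hinv1 hinv2
      obtain ⟨i, hi⟩ := hstep_exists A h1
      obtain ⟨hδc, hle⟩ := hdec A i hi
      have hcS : (S i \ A).card ≤ l + δ - 1 :=
        le_trans (Finset.card_le_card Finset.sdiff_subset) (hS1 i)
      set c := (S i \ A).card with hc
      set e := c - (δ - 1) with he
      have hel : e ≤ l := by omega
      have heα : e * α ≤ l * α := Nat.mul_le_mul_right α hel
      by_cases hzero : fA C (A ∪ S i) = 0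
      · rw [hzero, zero_add] at hle
        obtain ⟨B, hB1, hB2⟩ := hE n A (by omega) h1
        refine ⟨B, t, hB1, ?_, ?_⟩
        · have e2 : (t + 1) * l * α = t * l * α + l * α := by ring
          have h4 : k * α ≤ ((t + 1) * l) * α := by
            rw [show ((t+1)*l)*α = (t+1)*l*α from rfl]
            omega
          exact Nat.le_of_mul_le_mul_right h4 (by omega)
        · have e3 : α * (k + t * (δ - 1)) = k * α + α * t * (δ - 1) := by ring
          have h5 : α * (k + t * (δ - 1)) ≤ α * (B.card + 1) := by omega
          exact Nat.le_of_mul_le_mul_left h5 (by omega)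
      · have h1' : 1 ≤ fA C (A ∪ S i) := by omega
        have hcardu : (A ∪ S i).card = A.card + c := by
          have h8 := Finset.card_sdiff_add_card (S i) A
          rw [Finset.union_comm] at h8
          omega
        have hsplit : α * c = α * e + α * (δ - 1) := by
          rw [show c = e + (δ - 1) by omega]
          ring
        have e4 : α * (A.card + c) = α * A.card + α * c := by ring
        have e5 : α * (t + 1) * (δ - 1) = α * t * (δ - 1) + α * (δ - 1) := by ring
        have e6 : (t + 1) * l * α = t * l * α + l * α := by ring
        have e7 : e * α = α * e := by ring
        apply ih (A ∪ S i) (t + 1) (by omega) h1'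
        · rw [hcardu]
          omega
        · omega
  -- kick off
  have hstart1 : 1 ≤ fA C ∅ := by
    rw [hf_empty]
    exact Nat.one_le_iff_ne_zero.mpr (by positivity)
  obtain ⟨B, t, hB1, htl, hBcard⟩ := hMain (k * α) ∅ 0 (le_of_eq hf_empty) hstart1
    (by simp [hf_empty]) (by simp [hf_empty])
  -- produce a low-weight codeword
  obtain ⟨c, hcmem, hc0⟩ := fA_nonzero C hB1
  obtain ⟨hcC, hcv⟩ := Submodule.mem_inf.mp hcmem
  have hw : blockWeight c ≤ n - B.card := by
    unfold blockWeight
    calc (Finset.univ.filter fun i => c i ≠ 0).card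
        ≤ (Finset.univ \ B).card := by
          apply Finset.card_le_card
          intro x hx
          rw [Finset.mem_sdiff]
          refine ⟨Finset.mem_univ x, ?_⟩
          intro hxB
          exact (Finset.mem_filter.mp hx).2 (hcv x hxB)
      _ = n - B.card := by
          rw [Finset.card_sdiff_of_subset (Finset.subset_univ B)]
          simp
  have hdm : dmin C ≤ n - B.card :=
    le_trans (Nat.sInf_le ⟨c, hcC, hc0, rfl⟩) hw
  have hBn : B.card ≤ n := by
    have := Finset.card_le_card (Finset.subset_univ B)
    simpa using this
  -- integer arithmetic
  have hZ : (dmin C : ℤ) + B.card ≤ n := by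
    exact_mod_cast (show dmin C + B.card ≤ n by omega)
  have hceil : ⌈(k : ℚ) / (l : ℚ)⌉ ≤ (t : ℤ) + 1 := by
    rw [Int.ceil_le]
    rw [div_le_iff₀ (by positivity : (0 : ℚ) < (l : ℚ))]
    push_cast
    exact_mod_cast htl
  have h6 : (k : ℤ) + t * ((δ : ℤ) - 1) ≤ (B.card : ℤ) + 1 := by
    have := hBcard
    have hcast : ((δ - 1 : ℕ) : ℤ) = (δ : ℤ) - 1 := by
      rw [Nat.cast_sub hδ]; simp
    calc (k : ℤ) + t * ((δ : ℤ) - 1) = ((k + t * (δ - 1) : ℕ) : ℤ) := by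
          push_cast [hcast]; ring
      _ ≤ (B.card : ℤ) + 1 := by exact_mod_cast hBcard
  have h7 : (⌈(k : ℚ) / (l : ℚ)⌉ - 1) * ((δ : ℤ) - 1) ≤ (t : ℤ) * ((δ : ℤ) - 1) := by
    apply mul_le_mul_of_nonneg_right
    · omega
    · omega
  linarith
end

section
/- Let F_q be a finite field and let C₀ be an (n₀, κ) MDS vector code of vector length α given by an injective linear encoding E : D → (Fin n₀ → (Fin α → F_q)) with dim_{F_q} D = κα, meaning that every subset of Fin n₀ of cardinality κ is an information set for C₀. Let l ≥ 1 and δ ≥ 2 be integers with δ − 1 ≤ n₀ − κ, and form a new code C' by splitting each of δ − 1 designated coordinates of the encoding (the first δ − 1 parity maps e_j) into l linear maps summing to e_j, keeping all other coordinates; C' has block length n = n₀ + (l − 1)(δ − 1). Then the minimum distance of C' satisfies d_min(C') ≥ n₀ − κ + 1 = n − κ + 1 − (l − 1)(δ − 1). -/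
/- Parity-splitting an `(n₀, κ)` MDS vector code of vector length `α`: each of `δ - 1`
designated coordinates `ι t` of an injective linear encoding `e` is split into `l` linear
maps `f t 1, …, f t l` summing to `e (ι t)`, yielding a code `C'` of block length
`n = n₀ + (l - 1)(δ - 1)`. Then the minimum distance of `C'` (the minimum, over nonzero
messages `x`, of the number of nonzero vector symbols of the split encoding of `x`)
satisfies `d_min(C') ≥ n₀ - κ + 1 = n - κ + 1 - (l - 1)(δ - 1)`. -/
open Classical in
theorem parity_splitting_mds_distance_bound {F : Type} [Field F] [Fintype F]
    (D : Type) [AddCommGroup D] [Module F D] [FiniteDimensional F D]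
    {n₀ κ α l δ : ℕ} (hκ : 1 ≤ κ) (hα : 1 ≤ α) (hl : 1 ≤ l) (hδ : 2 ≤ δ)
    (hδκ : δ - 1 ≤ n₀ - κ)
    (e : Fin n₀ → (D →ₗ[F] (Fin α → F)))
    (hdim : Module.finrank F D = κ * α)
    (hinj : Function.Injective fun x : D => fun i : Fin n₀ => e i x)
    (hMDS : ∀ I : Finset (Fin n₀), I.card = κ →
      ∀ x y : D, (∀ i ∈ I, e i x = e i y) → x = y)
    (ι : Fin (δ - 1) → Fin n₀) (hι : Function.Injective ι)
    (f : Fin (δ - 1) → Fin l → (D →ₗ[F] (Fin α → F)))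
    (hsplit : ∀ t : Fin (δ - 1), ∑ s, f t s = e (ι t)) :
    n₀ - κ + 1 ≤
        sInf {w : ℕ | ∃ x : D, x ≠ 0 ∧
          w = (Finset.univ.filter fun i : Fin n₀ =>
                (∀ t, ι t ≠ i) ∧ e i x ≠ 0).card +
              (Finset.univ.filter fun p : Fin (δ - 1) × Fin l => f p.1 p.2 x ≠ 0).card} ∧
      n₀ - κ + 1 = (n₀ + (l - 1) * (δ - 1)) - κ + 1 - (l - 1) * (δ - 1) := by
  have hκn : κ < n₀ := by omega
  refine ⟨?_, by omega⟩
  have hD : Nontrivial D := by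
    apply Module.nontrivial_of_finrank_pos (R := F)
    rw [hdim]; exact Nat.mul_pos hκ hα
  obtain ⟨x₀, hx₀⟩ := exists_ne (0 : D)
  apply le_csInf
  · exact ⟨_, x₀, hx₀, rfl⟩
  rintro w ⟨x, hx, rfl⟩
  set A : Finset (Fin n₀) := Finset.univ.filter (fun i => e i x ≠ 0) with hA
  have hAcard : n₀ - κ + 1 ≤ A.card := by
    by_contra h
    push_neg at h
    have hcompl : κ ≤ Aᶜ.card := by
      have := Finset.card_compl A
      simp only [Fintype.card_fin] at this
      omega
    obtain ⟨I, hIsub, hIcard⟩ := Finset.exists_subset_card_eq hcompl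
    refine hx (hMDS I hIcard x 0 (fun i hi => ?_))
    have hc : i ∈ Aᶜ := hIsub hi
    simp only [hA, Finset.mem_compl, Finset.mem_filter, Finset.mem_univ, true_and,
      not_not] at hc
    simpa using hc
  have hA12 : (A.filter fun i => ∃ t, ι t = i).card
      + (A.filter fun i => ¬ ∃ t, ι t = i).card = A.card :=
    Finset.card_filter_add_card_filter_not (fun i => ∃ t, ι t = i)
  have h1 : (Finset.univ.filter fun i : Fin n₀ => (∀ t, ι t ≠ i) ∧ e i x ≠ 0)
      = A.filter fun i => ¬ ∃ t, ι t = i := by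
    ext i
    simp only [hA, Finset.mem_filter, Finset.mem_univ, true_and, not_exists]
    tauto
  have hpos1 : 0 < δ - 1 := by omega
  have hex : ∀ i ∈ A.filter fun i => ∃ t, ι t = i,
      ∃ t s, ι t = i ∧ f t s x ≠ 0 := by
    intro i hi
    simp only [hA, Finset.mem_filter, Finset.mem_univ, true_and] at hi
    obtain ⟨hne, t, ht⟩ := hi
    by_contra hcon
    push_neg at hcon
    apply hne
    rw [← ht, ← hsplit t]
    simp only [LinearMap.coe_sum, Finset.sum_apply]
    exact Finset.sum_eq_zero fun s _ => hcon t s ht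
  have h2 : (A.filter fun i => ∃ t, ι t = i).card
      ≤ (Finset.univ.filter fun p : Fin (δ - 1) × Fin l => f p.1 p.2 x ≠ 0).card := by
    apply Finset.card_le_card_of_injOn
      (fun i => if h : ∃ t s, ι t = i ∧ f t s x ≠ 0
        then (h.choose, h.choose_spec.choose) else (⟨0, hpos1⟩, ⟨0, hl⟩))
    · intro i hi
      have h := hex i hi
      simp only [dif_pos h, Finset.mem_filter, Finset.mem_univ, true_and]
      exact Finset.mem_coe.mpr (Finset.mem_filter.mpr ⟨Finset.mem_univ _, h.choose_spec.choose_spec.2⟩)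
    · intro i hi i' hi' heq
      have h := hex i hi
      have h' := hex i' hi'
      simp only [dif_pos h, dif_pos h'] at heq
      have e1 : ι h.choose = i := h.choose_spec.choose_spec.1
      have e2 : ι h'.choose = i' := h'.choose_spec.choose_spec.1
      have hfst : h.choose = h'.choose := congrArg Prod.fst heq
      rw [← e1, ← e2, hfst]
  rw [h1]
  omega
end
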